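/- Let β₁, β₂ ∈ ℂ[x] be polynomials with β₂ ≠ 0 and deg β₁ > deg β₂, let λ ∈ ℂ be a nonzero constant, let m ≥ 2 and L ≥ 1 be integers, and let d₀, d₁, …, d_{L−1} ∈ ℂ be any complex constants. Then β₁^{m(L−1)}·(β₁ + λ·β₂) ≠ β₁·(d₀·β₁^{L−1} + d₁·β₁^{L−2}·β₂ + ⋯ + d_{L−1}·β₂^{L−1})^m in ℂ[x]. -/

import Mathlib

open Polynomial

-- base case lemma: a + λ b = C e * a  impossible
lemma base_contra (a b : Polynomial ℂ) (hb : b ≠ 0) (hdeg : b.natDegree < a.natDegree)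
    (lam : ℂ) (hlam : lam ≠ 0) (e : ℂ) :
    a + C lam * b ≠ C e * a := by
  intro h
  have h2 : C lam * b = C (e - 1) * a := by
    rw [C_sub, map_one]; linear_combination h
  by_cases he : e - 1 = 0
  · rw [he, map_zero, zero_mul] at h2
    exact (mul_ne_zero (C_ne_zero.mpr hlam) hb) h2
  · have := congrArg natDegree h2
    rw [natDegree_C_mul hlam, natDegree_C_mul he] at this
    omega

lemma core (m : ℕ) (hm : 2 ≤ m) (lam : ℂ) (hlam : lam ≠ 0) :
    ∀ L, 1 ≤ L → ∀ a b : Polynomial ℂ, IsCoprime a b → b ≠ 0 →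
      b.natDegree < a.natDegree → ∀ dd : Fin L → ℂ,
    a ^ (m * (L - 1)) * (a + C lam * b) ≠
      a * (∑ i : Fin L, C (dd i) * a ^ (L - 1 - (i : ℕ)) * b ^ (i : ℕ)) ^ m := by
  intro L hL1
  induction L, hL1 using Nat.le_induction with
  | base =>
    intro a b hcop hb hdeg dd h
    have hs : (∑ i : Fin 1, C (dd i) * a ^ (1 - 1 - (i : ℕ)) * b ^ (i : ℕ)) = C (dd 0) := by
      simp
    rw [hs] at h
    simp only [Nat.sub_self, mul_zero, pow_zero, one_mul] at h
    exact base_contra a b hb hdeg lam hlam (dd 0 ^ m) (by rw [map_pow]; linear_combination h)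
  | succ L hL ih =>
    intro a b hcop hb hdeg dd h
    have ha : a ≠ 0 := by
      intro h0; rw [h0] at hdeg; simp at hdeg
    have haD : 1 ≤ a.natDegree := by omega
    set S := ∑ i : Fin (L + 1), C (dd i) * a ^ (L + 1 - 1 - (i : ℕ)) * b ^ (i : ℕ) with hS
    set T := ∑ i : Fin L, C (dd i.castSucc) * a ^ (L - 1 - (i : ℕ)) * b ^ (i : ℕ) with hT
    -- split off last summand
    have hsplit : S = a * T + C (dd (Fin.last L)) * b ^ L := by
      rw [hS, Fin.sum_univ_castSucc, Finset.mul_sum]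
      refine congrArg₂ (· + ·) ?_ ?_
      · apply Finset.sum_congr rfl
        intro i _
        have hi : (i : ℕ) < L := i.isLt
        have : L + 1 - 1 - (i : ℕ) = (L - 1 - (i : ℕ)) + 1 := by omega
        rw [Fin.coe_castSucc, this, pow_succ]
        ring
      · simp
    -- cancel one a
    have hml : 2 ≤ m * L := by nlinarith
    have h1 : a ^ (m * L - 1) * (a + C lam * b) = S ^ m := by
      apply mul_left_cancel₀ ha
      calc a * (a ^ (m * L - 1) * (a + C lam * b))
          = a ^ (m * L) * (a + C lam * b) := by
            rw [← mul_assoc, ← pow_succ']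
            congr 2
            omega
        _ = a * S ^ m := by simpa using h
    -- a divides S ^ m
    have hdvd1 : a ∣ S ^ m := ⟨a ^ (m * L - 2) * (a + C lam * b), by
      rw [← h1, ← mul_assoc, ← pow_succ']
      congr 2
      omega⟩
    have hdvd2 : a ∣ S - C (dd (Fin.last L)) * b ^ L := ⟨T, by rw [hsplit]; ring⟩
    have hdvd3 : a ∣ (C (dd (Fin.last L)) * b ^ L) ^ m := by
      have h4 := dvd_sub hdvd1 (hdvd2.trans (sub_dvd_pow_sub_pow _ _ m))
      simpa using h4
    have hdlast : dd (Fin.last L) = 0 := by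
      by_contra hne
      rw [mul_pow, ← map_pow, ← pow_mul] at hdvd3
      have h5 : a ∣ C (dd (Fin.last L) ^ m) :=
        (hcop.pow_right (n := L * m)).dvd_of_dvd_mul_right hdvd3
      have h6 : C (dd (Fin.last L) ^ m) ≠ 0 := by
        simpa using pow_ne_zero m hne
      have := natDegree_le_of_dvd h5 h6
      simp [natDegree_C] at this
      omega
    -- now S = a * T
    have hsat : S = a * T := by rw [hsplit, hdlast]; simp
    rw [hsat, mul_pow] at h1
    -- cancel a^(m-1)
    have h2 : a ^ (m * (L - 1)) * (a + C lam * b) = a * T ^ m := by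
      apply mul_left_cancel₀ (pow_ne_zero (m - 1) ha)
      calc a ^ (m - 1) * (a ^ (m * (L - 1)) * (a + C lam * b))
          = a ^ (m * L - 1) * (a + C lam * b) := by
            rw [← mul_assoc, ← pow_add]
            congr 2
            cases L with
            | zero => omega
            | succ L' => simp only [Nat.add_sub_cancel, Nat.mul_succ]; omega
        _ = a ^ m * T ^ m := h1
        _ = a ^ (m - 1) * (a * T ^ m) := by
            rw [← mul_assoc, ← pow_succ]
            congr 2
            omega
    exact ih a b hcop hb hdeg (fun i => dd i.castSucc) h2

/-- **Impossibility of the linearly dependent case (binary setting).**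
Let `β₁ β₂ ∈ ℂ[x]` with `β₂ ≠ 0` and `deg β₁ > deg β₂`, let `λ ≠ 0`, `m ≥ 2`, `L ≥ 1` and
`d₀, …, d_{L-1} ∈ ℂ`.  Then
`β₁^{m(L−1)}·(β₁ + λ·β₂) ≠ β₁·(∑_{i<L} d_i·β₁^{L−1−i}·β₂^i)^m`. -/
theorem stmt8 (β₁ β₂ : Polynomial ℂ) (hβ₂ : β₂ ≠ 0)
    (hdeg : β₂.natDegree < β₁.natDegree)
    (lam : ℂ) (hlam : lam ≠ 0) (m L : ℕ) (hm : 2 ≤ m) (hL : 1 ≤ L)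
    (dd : Fin L → ℂ) :
    β₁ ^ (m * (L - 1)) * (β₁ + Polynomial.C lam * β₂) ≠
      β₁ * (∑ i : Fin L,
        Polynomial.C (dd i) * β₁ ^ (L - 1 - (i : ℕ)) * β₂ ^ (i : ℕ)) ^ m := by
  intro h
  set g := GCDMonoid.gcd β₁ β₂ with hgdef
  have hg : g ≠ 0 := by
    rw [hgdef, Ne, gcd_eq_zero_iff]
    tauto
  set a := β₁ / g with hadef
  set b := β₂ / g with hbdef
  have ha1 : β₁ = g * a := (EuclideanDomain.mul_div_cancel' hg (gcd_dvd_left _ _)).symm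
  have hb1 : β₂ = g * b := (EuclideanDomain.mul_div_cancel' hg (gcd_dvd_right _ _)).symm
  have hcop : IsCoprime a b := isCoprime_div_gcd_div_gcd hβ₂
  have hb : b ≠ 0 := by
    intro h0; rw [h0, mul_zero] at hb1; exact hβ₂ hb1
  have ha : a ≠ 0 := by
    intro h0
    rw [h0, mul_zero] at ha1
    rw [ha1] at hdeg
    simp at hdeg
  have hdeg' : b.natDegree < a.natDegree := by
    rw [ha1, hb1, natDegree_mul hg ha, natDegree_mul hg hb] at hdeg
    omega
  set S' := ∑ i : Fin L, C (dd i) * a ^ (L - 1 - (i : ℕ)) * b ^ (i : ℕ) with hS'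
  have hsum : (∑ i : Fin L, C (dd i) * (g * a) ^ (L - 1 - (i : ℕ)) * (g * b) ^ (i : ℕ))
      = g ^ (L - 1) * S' := by
    rw [hS', Finset.mul_sum]
    apply Finset.sum_congr rfl
    intro i _
    have hi : (i : ℕ) ≤ L - 1 := by have := i.isLt; omega
    rw [mul_pow, mul_pow,
      show g ^ (L - 1) = g ^ (L - 1 - (i : ℕ)) * g ^ (i : ℕ) by
        rw [← pow_add]; congr 1; omega]
    ring
  rw [ha1, hb1, hsum] at h
  refine core m hm lam hlam L hL a b hcop hb hdeg' dd ?_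
  apply mul_left_cancel₀ (pow_ne_zero (m * (L - 1) + 1) hg)
  calc g ^ (m * (L - 1) + 1) * (a ^ (m * (L - 1)) * (a + C lam * b))
      = (g * a) ^ (m * (L - 1)) * (g * a + C lam * (g * b)) := by ring
    _ = g * a * (g ^ (L - 1) * S') ^ m := h
    _ = g ^ ((L - 1) * m + 1) * (a * S' ^ m) := by ring
    _ = g ^ (m * (L - 1) + 1) * (a * S' ^ m) := by rw [Nat.mul_comm (L-1) m]
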